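/- Let d ≥ 1, let ρ be a probability measure on ℝ^d, let F be a countable family of open axis-parallel cubes in ℝ^d, let B ≥ 1, and let D > 0 satisfy the doubling condition ρ(5B√d · Q) ≤ D · ρ(Q) for every Q ∈ F, where r·Q denotes the cube with the same center as Q and sidelength multiplied by r. Then for every family (a_Q)_{Q∈F} of nonnegative real numbers, ‖Σ_{Q∈F} a_Q · χ_{B·Q}‖_{L²(ρ)} ≤ (2D)^{3/2} · ‖Σ_{Q∈F} a_Q · χ_Q‖_{L²(ρ)}, where χ_S denotes the characteristic function of the set S. -/

import Mathlib

open MeasureTheory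
open scoped NNReal ENNReal

noncomputable section

/-- The open axis-parallel cube with center `z` and sidelength `l`. -/
def cube {d : ℕ} (z : EuclideanSpace ℝ (Fin d)) (l : ℝ) : Set (EuclideanSpace ℝ (Fin d)) :=
  {x | ∀ i, |x i - z i| < l / 2}

namespace MaximalAux

variable {d : ℕ} {ι : Type}

lemma cube_mono (z : EuclideanSpace ℝ (Fin d)) {s t : ℝ} (h : s ≤ t) :
    cube z s ⊆ cube z t :=
  fun x hx i => lt_of_lt_of_le (hx i) (by linarith)

lemma measurableSet_cube (z : EuclideanSpace ℝ (Fin d)) (s : ℝ) :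
    MeasurableSet (cube z s) := by
  have h : cube z s
      = ⋂ i, (fun x : EuclideanSpace ℝ (Fin d) => x i) ⁻¹' Set.Ioo (z i - s/2) (z i + s/2) := by
    ext x
    simp only [cube, Set.mem_setOf_eq, Set.mem_iInter, Set.mem_preimage, Set.mem_Ioo, abs_lt]
    constructor
    · intro h i; obtain ⟨h1, h2⟩ := h i; constructor <;> linarith
    · intro h i; obtain ⟨h1, h2⟩ := h i; constructor <;> linarith
  rw [h]
  exact MeasurableSet.iInter fun i => ((measurable_pi_apply i).comp (WithLp.measurable_ofLp _ _)) measurableSet_Ioo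

lemma center_mem_cube (z : EuclideanSpace ℝ (Fin d)) {s : ℝ} (h : 0 < s) :
    z ∈ cube z s := fun i => by simp only [sub_self, abs_zero]; linarith

lemma cube_subset_enlarged (hd : 1 ≤ d) {B : ℝ} (hB : 1 ≤ B)
    {z z' : EuclideanSpace ℝ (Fin d)} {s t : ℝ}
    (hs : 0 < s) (hst : s ≤ t)
    (hne : (cube z (B * s) ∩ cube z' (B * t)).Nonempty) :
    cube z (B * s) ⊆ cube z' (5 * B * Real.sqrt d * t) := by
  obtain ⟨w, hw, hw'⟩ := hne
  have hsq : (1:ℝ) ≤ Real.sqrt d := Real.one_le_sqrt.mpr (by exact_mod_cast hd)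
  have ht : 0 < t := lt_of_lt_of_le hs hst
  have hBpos : (0:ℝ) < B := lt_of_lt_of_le one_pos hB
  intro y hy i
  have h1 := hy i
  have h2 := hw i
  have h3 := hw' i
  have e1 : |y i - z' i| ≤ |y i - z i| + |w i - z i| + |w i - z' i| := by
    have hrw : y i - z' i = ((y i - z i) - (w i - z i)) + (w i - z' i) := by ring
    calc |y i - z' i| = |((y i - z i) - (w i - z i)) + (w i - z' i)| := by rw [← hrw]
      _ ≤ |(y i - z i) - (w i - z i)| + |w i - z' i| := abs_add_le _ _
      _ ≤ (|y i - z i| + |w i - z i|) + |w i - z' i| := by gcongr; exact abs_sub _ _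
  have k1 : B * s ≤ B * t := mul_le_mul_of_nonneg_left hst hBpos.le
  have k2 : B * t * 1 ≤ B * t * Real.sqrt d :=
    mul_le_mul_of_nonneg_left hsq (mul_pos hBpos ht).le
  have key : B * s / 2 + B * s / 2 + B * t / 2 ≤ 5 * B * Real.sqrt d * t / 2 := by
    nlinarith [k1, k2]
  have hlt : |y i - z' i| < B * s / 2 + B * s / 2 + B * t / 2 := by
    have := abs_lt.mp h1
    have := abs_lt.mp h2
    have := abs_lt.mp h3
    linarith [e1, h1, h2, h3]
  linarith

lemma vitali (hd : 1 ≤ d) (z : ι → EuclideanSpace ℝ (Fin d)) (l : ι → ℝ)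
    (hl : ∀ i, 0 < l i) {B : ℝ} (hB : 1 ≤ B) (T : Finset ι) :
    ∃ U : Finset ι, U ⊆ T ∧
      (↑U : Set ι).PairwiseDisjoint (fun j => cube (z j) (B * l j)) ∧
      ∀ i ∈ T, ∃ j ∈ U, cube (z i) (B * l i) ⊆ cube (z j) (5 * B * Real.sqrt d * l j) := by
  classical
  induction T using Finset.strongInduction with
  | _ T ih =>
    rcases T.eq_empty_or_nonempty with rfl | hTne
    · exact ⟨∅, by simp, by simp, by simp⟩
    obtain ⟨i₀, hi₀T, hi₀max⟩ := T.exists_max_image l hTne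
    set T' := T.filter (fun i => cube (z i) (B * l i) ∩ cube (z i₀) (B * l i₀) = ∅) with hT'
    have hBl : (0:ℝ) < B * l i₀ := mul_pos (lt_of_lt_of_le one_pos hB) (hl i₀)
    have hcne : (cube (z i₀) (B * l i₀)).Nonempty := ⟨z i₀, center_mem_cube _ hBl⟩
    have hi₀not : i₀ ∉ T' := by
      simp only [hT', Finset.mem_filter, Set.inter_self, not_and]
      exact fun _ h => hcne.ne_empty h
    have hsub : T' ⊂ T := by
      rw [Finset.ssubset_def]
      exact ⟨Finset.filter_subset _ _, fun h => hi₀not (h hi₀T)⟩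
    obtain ⟨U', hU'sub, hU'disj, hU'cov⟩ := ih T' hsub
    refine ⟨insert i₀ U', ?_, ?_, ?_⟩
    · intro j hj
      rcases Finset.mem_insert.mp hj with rfl | hj'
      · exact hi₀T
      · exact Finset.filter_subset _ _ (hU'sub hj')
    · rw [Finset.coe_insert]
      refine hU'disj.insert fun j hjU' _ => ?_
      have hj' : j ∈ T' := hU'sub hjU'
      have hempty : cube (z j) (B * l j) ∩ cube (z i₀) (B * l i₀) = ∅ :=
        (Finset.mem_filter.mp hj').2
      exact Set.disjoint_iff_inter_eq_empty.mpr (by rw [Set.inter_comm]; exact hempty)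
    · intro i hiT
      by_cases hi : i ∈ T'
      · obtain ⟨j, hjU', hcov⟩ := hU'cov i hi
        exact ⟨j, Finset.mem_insert_of_mem hjU', hcov⟩
      · refine ⟨i₀, Finset.mem_insert_self _ _, ?_⟩
        have hne : (cube (z i) (B * l i) ∩ cube (z i₀) (B * l i₀)).Nonempty := by
          rw [Set.nonempty_iff_ne_empty]
          exact fun h => hi (Finset.mem_filter.mpr ⟨hiT, h⟩)
        exact cube_subset_enlarged hd hB (hl i) (hi₀max i hiT) hne

/-- The maximal operator adapted to the family of cubes. -/
def mOp (ρ : Measure (EuclideanSpace ℝ (Fin d))) (z : ι → EuclideanSpace ℝ (Fin d))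
    (l : ι → ℝ) (B : ℝ) (s : Finset ι) (H : EuclideanSpace ℝ (Fin d) → ℝ≥0∞)
    (x : EuclideanSpace ℝ (Fin d)) : ℝ≥0∞ :=
  ⨆ j ∈ s, (cube (z j) (B * l j)).indicator
    (fun _ => (∫⁻ y in cube (z j) (B * l j), H y ∂ρ) / ρ (cube (z j) (B * l j))) x

variable [Countable ι] {ρ : Measure (EuclideanSpace ℝ (Fin d))}
  {z : ι → EuclideanSpace ℝ (Fin d)} {l : ι → ℝ} {B : ℝ}

lemma mOp_measurable (s : Finset ι) (H : EuclideanSpace ℝ (Fin d) → ℝ≥0∞) :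
    Measurable (mOp ρ z l B s H) := by
  refine Measurable.iSup fun j => Measurable.iSup fun _ => ?_
  exact measurable_const.indicator (measurableSet_cube _ _)

lemma le_mOp {s : Finset ι} {j : ι} (hj : j ∈ s) (H : EuclideanSpace ℝ (Fin d) → ℝ≥0∞)
    {x : EuclideanSpace ℝ (Fin d)} (hx : x ∈ cube (z j) (B * l j)) :
    (∫⁻ y in cube (z j) (B * l j), H y ∂ρ) / ρ (cube (z j) (B * l j))
      ≤ mOp ρ z l B s H x := by
  have h := le_iSup₂ (f := fun j (_ : j ∈ s) => (cube (z j) (B * l j)).indicator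
    (fun _ => (∫⁻ y in cube (z j) (B * l j), H y ∂ρ) / ρ (cube (z j) (B * l j))) x) j hj
  rwa [Set.indicator_of_mem hx] at h

lemma avg_ne_top {H : EuclideanSpace ℝ (Fin d) → ℝ≥0∞} (hH : ∫⁻ y, H y ∂ρ ≠ ∞) (j : ι) :
    (∫⁻ y in cube (z j) (B * l j), H y ∂ρ) / ρ (cube (z j) (B * l j)) ≠ ∞ := by
  rcases eq_or_ne (ρ (cube (z j) (B * l j))) 0 with h0 | h0
  · rw [setLIntegral_measure_zero _ _ h0, ENNReal.zero_div]
    exact ENNReal.zero_ne_top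
  · exact (ENNReal.div_lt_top
      (ne_top_of_le_ne_top hH (setLIntegral_le_lintegral _ _)) h0).ne

lemma mOp_ne_top {s : Finset ι} {H : EuclideanSpace ℝ (Fin d) → ℝ≥0∞}
    (hH : ∫⁻ y, H y ∂ρ ≠ ∞) (x : EuclideanSpace ℝ (Fin d)) :
    mOp ρ z l B s H x ≠ ∞ := by
  have hle : mOp ρ z l B s H x ≤ ∑ j ∈ s,
      (∫⁻ y in cube (z j) (B * l j), H y ∂ρ) / ρ (cube (z j) (B * l j)) := by
    refine iSup₂_le fun j hj => ?_
    by_cases hx : x ∈ cube (z j) (B * l j)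
    · rw [Set.indicator_of_mem hx]
      exact Finset.single_le_sum
        (f := fun j => (∫⁻ y in cube (z j) (B * l j), H y ∂ρ) / ρ (cube (z j) (B * l j)))
        (fun _ _ => zero_le) hj
    · rw [Set.indicator_of_notMem hx]
      exact zero_le
  exact (lt_of_le_of_lt hle (ENNReal.sum_lt_top.mpr fun j _ => (avg_ne_top hH j).lt_top)).ne

lemma mOp_weak (hd : 1 ≤ d) [IsFiniteMeasure ρ] (hl : ∀ i, 0 < l i) (hB : 1 ≤ B)
    {De : ℝ≥0∞}
    (hdb : ∀ i, ρ (cube (z i) (5 * B * Real.sqrt d * l i)) ≤ De * ρ (cube (z i) (l i)))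
    (s : Finset ι) (H : EuclideanSpace ℝ (Fin d) → ℝ≥0∞)
    {t : ℝ≥0∞} (ht0 : t ≠ 0) (httop : t ≠ ∞) :
    ρ {x | t < mOp ρ z l B s H x} ≤ De * (∫⁻ y, H y ∂ρ) / t := by
  classical
  set T := s.filter
    (fun j => t < (∫⁻ y in cube (z j) (B * l j), H y ∂ρ) / ρ (cube (z j) (B * l j))) with hT
  have hset : {x | t < mOp ρ z l B s H x} = ⋃ j ∈ T, cube (z j) (B * l j) := by
    ext x
    simp only [Set.mem_setOf_eq, mOp, lt_iSup_iff, Set.mem_iUnion, hT, Finset.mem_filter]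
    constructor
    · rintro ⟨j, hjs, hlt⟩
      by_cases hx : x ∈ cube (z j) (B * l j)
      · rw [Set.indicator_of_mem hx] at hlt
        exact ⟨j, ⟨hjs, hlt⟩, hx⟩
      · rw [Set.indicator_of_notMem hx] at hlt
        exact absurd hlt (by simp)
    · rintro ⟨j, ⟨hjs, hjlt⟩, hx⟩
      exact ⟨j, hjs, by rwa [Set.indicator_of_mem hx]⟩
  obtain ⟨U, hUT, hUdisj, hUcov⟩ := vitali hd z l hl hB T
  have cover : (⋃ j ∈ T, cube (z j) (B * l j))
      ⊆ ⋃ j ∈ U, cube (z j) (5 * B * Real.sqrt d * l j) := by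
    refine Set.iUnion₂_subset fun i hi => ?_
    obtain ⟨j, hjU, hsub⟩ := hUcov i hi
    intro y hy; exact Set.mem_biUnion hjU (hsub hy)
  have perj : ∀ j ∈ U, ρ (cube (z j) (l j))
      ≤ (∫⁻ y in cube (z j) (B * l j), H y ∂ρ) / t := by
    intro j hjU
    have hjT := hUT hjU
    have hjlt := (Finset.mem_filter.mp hjT).2
    have hρne : ρ (cube (z j) (B * l j)) ≠ 0 := by
      intro h0
      rw [setLIntegral_measure_zero _ _ h0, ENNReal.zero_div] at hjlt
      exact absurd hjlt (by simp)
    have h1 : ρ (cube (z j) (l j)) ≤ ρ (cube (z j) (B * l j)) :=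
      measure_mono (cube_mono _ (le_mul_of_one_le_left (hl j).le hB))
    have h2 : t * ρ (cube (z j) (B * l j)) < ∫⁻ y in cube (z j) (B * l j), H y ∂ρ :=
      (ENNReal.lt_div_iff_mul_lt (Or.inl hρne) (Or.inl (measure_ne_top ρ _))).mp hjlt
    have h3 : ρ (cube (z j) (B * l j)) ≤ (∫⁻ y in cube (z j) (B * l j), H y ∂ρ) / t := by
      rw [ENNReal.le_div_iff_mul_le (Or.inl ht0) (Or.inl httop)]
      rw [mul_comm]
      exact (le_of_lt h2)
    exact h1.trans h3
  calc ρ {x | t < mOp ρ z l B s H x}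
      = ρ (⋃ j ∈ T, cube (z j) (B * l j)) := by rw [hset]
    _ ≤ ρ (⋃ j ∈ U, cube (z j) (5 * B * Real.sqrt d * l j)) := measure_mono cover
    _ ≤ ∑ j ∈ U, ρ (cube (z j) (5 * B * Real.sqrt d * l j)) := measure_biUnion_finset_le U _
    _ ≤ ∑ j ∈ U, De * ρ (cube (z j) (l j)) := Finset.sum_le_sum fun j _ => hdb j
    _ ≤ ∑ j ∈ U, De * ((∫⁻ y in cube (z j) (B * l j), H y ∂ρ) / t) :=
        Finset.sum_le_sum fun j hj => mul_le_mul_right (perj j hj) De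
    _ = De * ((∑ j ∈ U, ∫⁻ y in cube (z j) (B * l j), H y ∂ρ) / t) := by
        rw [← Finset.mul_sum]
        simp only [div_eq_mul_inv, ← Finset.sum_mul]
    _ = De * ((∫⁻ y in ⋃ j ∈ U, cube (z j) (B * l j), H y ∂ρ) / t) := by
        rw [lintegral_biUnion_finset hUdisj (fun j _ => measurableSet_cube _ _) H]
    _ ≤ De * ((∫⁻ y, H y ∂ρ) / t) := by
        gcongr
        exact Measure.restrict_le_self
    _ = De * (∫⁻ y, H y ∂ρ) / t := by rw [mul_div_assoc]

lemma mOp_le_trunc_add [IsFiniteMeasure ρ] (s : Finset ι)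
    (G : EuclideanSpace ℝ (Fin d) → ℝ≥0∞) (hG : Measurable G)
    (c : ℝ≥0∞) (x : EuclideanSpace ℝ (Fin d)) :
    mOp ρ z l B s G x ≤ mOp ρ z l B s (fun y => ({y | c < G y}).indicator G y) x + c := by
  refine iSup₂_le fun j hj => ?_
  rcases eq_or_ne (ρ (cube (z j) (B * l j))) 0 with h0 | h0
  · have hz : (∫⁻ y in cube (z j) (B * l j), G y ∂ρ) / ρ (cube (z j) (B * l j)) = 0 := by
      rw [setLIntegral_measure_zero _ _ h0, ENNReal.zero_div]
    by_cases hx : x ∈ cube (z j) (B * l j)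
    · rw [Set.indicator_of_mem hx, hz]
      exact zero_le
    · rw [Set.indicator_of_notMem hx]
      exact zero_le
  · have hpt : ∀ y, G y ≤ ({y | c < G y}).indicator G y + c := by
      intro y
      by_cases hy : y ∈ {y | c < G y}
      · rw [Set.indicator_of_mem hy]; exact le_self_add
      · rw [Set.indicator_of_notMem hy, zero_add]
        exact not_lt.mp hy
    have havg : (∫⁻ y in cube (z j) (B * l j), G y ∂ρ) / ρ (cube (z j) (B * l j))
        ≤ (∫⁻ y in cube (z j) (B * l j), ({y | c < G y}).indicator G y ∂ρ)
            / ρ (cube (z j) (B * l j)) + c := by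
      calc (∫⁻ y in cube (z j) (B * l j), G y ∂ρ) / ρ (cube (z j) (B * l j))
          ≤ (∫⁻ y in cube (z j) (B * l j), (({y | c < G y}).indicator G y + c) ∂ρ)
              / ρ (cube (z j) (B * l j)) := by
            exact ENNReal.div_le_div_right (lintegral_mono hpt) _
        _ = ((∫⁻ y in cube (z j) (B * l j), ({y | c < G y}).indicator G y ∂ρ)
              + c * ρ (cube (z j) (B * l j))) / ρ (cube (z j) (B * l j)) := by
            rw [lintegral_add_right _ measurable_const, setLIntegral_const]
        _ = (∫⁻ y in cube (z j) (B * l j), ({y | c < G y}).indicator G y ∂ρ)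
              / ρ (cube (z j) (B * l j))
            + (c * ρ (cube (z j) (B * l j))) / ρ (cube (z j) (B * l j)) := ENNReal.add_div
        _ = (∫⁻ y in cube (z j) (B * l j), ({y | c < G y}).indicator G y ∂ρ)
              / ρ (cube (z j) (B * l j)) + c := by
            rw [mul_div_assoc, ENNReal.div_self h0 (measure_ne_top ρ _), mul_one]
    by_cases hx : x ∈ cube (z j) (B * l j)
    · rw [Set.indicator_of_mem hx]
      refine havg.trans (add_le_add_left ?_ c)
      exact le_mOp hj _ hx
    · rw [Set.indicator_of_notMem hx]
      exact zero_le


lemma lintegral_weighted_sum (ρ : Measure (EuclideanSpace ℝ (Fin d)))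
    (A : ι → ℝ≥0∞) (hA : ∀ i, A i ≠ ∞) (S : ι → Set (EuclideanSpace ℝ (Fin d)))
    (hS : ∀ i, MeasurableSet (S i)) (H : EuclideanSpace ℝ (Fin d) → ℝ≥0∞)
    (hH : Measurable H) (s : Finset ι) :
    ∫⁻ x, (∑ i ∈ s, A i * (S i).indicator (fun _ => (1:ℝ≥0∞)) x) * H x ∂ρ
      = ∑ i ∈ s, A i * ∫⁻ x in S i, H x ∂ρ := by
  have hpt : ∀ x, (∑ i ∈ s, A i * (S i).indicator (fun _ => (1:ℝ≥0∞)) x) * H x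
      = ∑ i ∈ s, (S i).indicator (fun y => A i * H y) x := by
    intro x
    rw [Finset.sum_mul]
    refine Finset.sum_congr rfl fun i _ => ?_
    by_cases hx : x ∈ S i
    · simp [Set.indicator_of_mem hx]
    · simp [Set.indicator_of_notMem hx]
  calc ∫⁻ x, (∑ i ∈ s, A i * (S i).indicator (fun _ => (1:ℝ≥0∞)) x) * H x ∂ρ
      = ∫⁻ x, ∑ i ∈ s, (S i).indicator (fun y => A i * H y) x ∂ρ := lintegral_congr hpt
    _ = ∑ i ∈ s, ∫⁻ x, (S i).indicator (fun y => A i * H y) x ∂ρ :=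
        lintegral_finset_sum s fun i _ => ((hH.const_mul (A i)).indicator (hS i))
    _ = ∑ i ∈ s, A i * ∫⁻ x in S i, H x ∂ρ := by
        refine Finset.sum_congr rfl fun i _ => ?_
        rw [lintegral_indicator (hS i), lintegral_const_mul' _ _ (hA i)]

lemma core (hd : 1 ≤ d) (ρ : Measure (EuclideanSpace ℝ (Fin d))) [IsProbabilityMeasure ρ]
    (z : ι → EuclideanSpace ℝ (Fin d)) (l : ι → ℝ) (hl : ∀ i, 0 < l i)
    {B : ℝ} (hB : 1 ≤ B) {De : ℝ≥0∞} (hDe0 : De ≠ 0) (hDetop : De ≠ ∞)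
    (hdb : ∀ i, ρ (cube (z i) (5 * B * Real.sqrt d * l i)) ≤ De * ρ (cube (z i) (l i)))
    (A : ι → ℝ≥0∞) (hA : ∀ i, A i ≠ ∞) (s : Finset ι) :
    ∫⁻ x, (∑ i ∈ s, A i * (cube (z i) (B * l i)).indicator (fun _ => (1:ℝ≥0∞)) x)^2 ∂ρ ≤
      (2 * De)^3 *
        ∫⁻ x, (∑ i ∈ s, A i * (cube (z i) (l i)).indicator (fun _ => (1:ℝ≥0∞)) x)^2 ∂ρ := by
  classical
  set G : EuclideanSpace ℝ (Fin d) → ℝ≥0∞ :=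
    fun x => ∑ i ∈ s, A i * (cube (z i) (B * l i)).indicator (fun _ => (1:ℝ≥0∞)) x with hGdef
  set F : EuclideanSpace ℝ (Fin d) → ℝ≥0∞ :=
    fun x => ∑ i ∈ s, A i * (cube (z i) (l i)).indicator (fun _ => (1:ℝ≥0∞)) x with hFdef
  have hGmeas : Measurable G :=
    Finset.measurable_sum _ fun i _ =>
      (measurable_const.indicator (measurableSet_cube _ _)).const_mul _
  have hFmeas : Measurable F :=
    Finset.measurable_sum _ fun i _ =>
      (measurable_const.indicator (measurableSet_cube _ _)).const_mul _
  have hsumtop : (∑ i ∈ s, A i) ≠ ∞ := (ENNReal.sum_lt_top.mpr fun i _ => (hA i).lt_top).ne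
  have hGle : ∀ x, G x ≤ ∑ i ∈ s, A i := by
    intro x
    refine Finset.sum_le_sum fun i _ => ?_
    calc A i * (cube (z i) (B * l i)).indicator (fun _ => (1:ℝ≥0∞)) x
        ≤ A i * 1 := mul_le_mul_right (Set.indicator_apply_le fun _ => le_rfl) _
      _ = A i := mul_one _
  have hGfin : ∀ x, G x ≠ ∞ := fun x => (lt_of_le_of_lt (hGle x) hsumtop.lt_top).ne
  have hGint : ∫⁻ x, G x ∂ρ ≠ ∞ := by
    refine ne_top_of_le_ne_top ?_ (lintegral_mono hGle)
    rw [lintegral_const, measure_univ, mul_one]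
    exact hsumtop
  have hGsqint : ∫⁻ x, (G x)^2 ∂ρ ≠ ∞ := by
    refine ne_top_of_le_ne_top ?_ (lintegral_mono (fun x => pow_le_pow_left' (hGle x) 2))
    rw [lintegral_const, measure_univ, mul_one]
    exact ENNReal.pow_ne_top hsumtop
  set MG : EuclideanSpace ℝ (Fin d) → ℝ≥0∞ := mOp ρ z l B s G with hMGdef
  have hMGmeas : Measurable MG := mOp_measurable s G
  have hMGfin : ∀ x, MG x ≠ ∞ := fun x => mOp_ne_top hGint x
  -- Step 1 : ∫ G² = ∑ Aᵢ ∫_{BQᵢ} G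
  have step1 : ∫⁻ x, (G x)^2 ∂ρ
      = ∑ i ∈ s, A i * ∫⁻ x in cube (z i) (B * l i), G x ∂ρ := by
    rw [← lintegral_weighted_sum ρ A hA _ (fun i => measurableSet_cube _ _) G hGmeas s]
    exact lintegral_congr fun x => by rw [pow_two]
  -- Step 2
  have step2 : ∀ i ∈ s, ∫⁻ x in cube (z i) (B * l i), G x ∂ρ
      ≤ De * ∫⁻ x in cube (z i) (l i), MG x ∂ρ := by
    intro i hi
    rcases eq_or_ne (ρ (cube (z i) (B * l i))) 0 with h0 | h0
    · rw [setLIntegral_measure_zero _ _ h0]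
      exact zero_le
    · have hBl : B * l i ≤ 5 * B * Real.sqrt d * l i := by
        have hsq : (1:ℝ) ≤ Real.sqrt d := Real.one_le_sqrt.mpr (by exact_mod_cast hd)
        have hB0 : (0:ℝ) < B := lt_of_lt_of_le one_pos hB
        nlinarith [hl i, mul_pos hB0 (hl i)]
      have h1 : ∫⁻ x in cube (z i) (B * l i), G x ∂ρ
          = ρ (cube (z i) (B * l i)) *
            ((∫⁻ x in cube (z i) (B * l i), G x ∂ρ) / ρ (cube (z i) (B * l i))) :=
        (ENNReal.mul_div_cancel h0 (measure_ne_top ρ _)).symm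
      have h2 : ρ (cube (z i) (B * l i)) ≤ De * ρ (cube (z i) (l i)) :=
        le_trans (measure_mono (cube_mono _ hBl)) (hdb i)
      have h3 : ((∫⁻ x in cube (z i) (B * l i), G x ∂ρ) / ρ (cube (z i) (B * l i)))
            * ρ (cube (z i) (l i)) ≤ ∫⁻ x in cube (z i) (l i), MG x ∂ρ := by
        rw [← setLIntegral_const]
        refine setLIntegral_mono' (measurableSet_cube _ _) fun x hx => ?_
        exact le_mOp hi G (cube_mono _ (le_mul_of_one_le_left (hl i).le hB) hx)
      calc ∫⁻ x in cube (z i) (B * l i), G x ∂ρ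
          = ρ (cube (z i) (B * l i)) *
            ((∫⁻ x in cube (z i) (B * l i), G x ∂ρ) / ρ (cube (z i) (B * l i))) := h1
        _ ≤ (De * ρ (cube (z i) (l i))) *
            ((∫⁻ x in cube (z i) (B * l i), G x ∂ρ) / ρ (cube (z i) (B * l i))) :=
            mul_le_mul_left h2 _
        _ = De * (((∫⁻ x in cube (z i) (B * l i), G x ∂ρ) / ρ (cube (z i) (B * l i)))
            * ρ (cube (z i) (l i))) := by ring
        _ ≤ De * ∫⁻ x in cube (z i) (l i), MG x ∂ρ := mul_le_mul_right h3 _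
  -- Step 3
  have step3 : ∑ i ∈ s, A i * (De * ∫⁻ x in cube (z i) (l i), MG x ∂ρ)
      = De * ∫⁻ x, F x * MG x ∂ρ := by
    rw [lintegral_weighted_sum ρ A hA _ (fun i => measurableSet_cube _ _) MG hMGmeas s,
      Finset.mul_sum]
    exact Finset.sum_congr rfl fun i _ => by ring
  have main1 : ∫⁻ x, (G x)^2 ∂ρ ≤ De * ∫⁻ x, F x * MG x ∂ρ := by
    rw [step1, ← step3]
    exact Finset.sum_le_sum fun i hi => mul_le_mul_right (step2 i hi) _
  -- Cauchy–Schwarz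
  have CS : ∫⁻ x, F x * MG x ∂ρ
      ≤ (∫⁻ x, (F x)^2 ∂ρ) ^ ((1:ℝ)/2) * (∫⁻ x, (MG x)^2 ∂ρ) ^ ((1:ℝ)/2) := by
    have hconj : Real.HolderConjugate 2 2 := Real.HolderConjugate.two_two
    have h := ENNReal.lintegral_mul_le_Lp_mul_Lq ρ hconj hFmeas.aemeasurable
      hMGmeas.aemeasurable
    simpa [Pi.mul_apply, ENNReal.rpow_two] using h
  -- Maximal L² bound
  have max2 : ∫⁻ x, (MG x)^2 ∂ρ ≤ 8 * De * ∫⁻ x, (G x)^2 ∂ρ := by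
    set m : EuclideanSpace ℝ (Fin d) → ℝ := fun x => (MG x).toReal with hm
    have m_nn : 0 ≤ᵐ[ρ] m := Filter.Eventually.of_forall fun x => ENNReal.toReal_nonneg
    have m_meas : AEMeasurable m ρ := hMGmeas.ennreal_toReal.aemeasurable
    have layer := lintegral_rpow_eq_lintegral_meas_lt_mul ρ m_nn m_meas
      (p := 2) (by norm_num)
    have hL : ∫⁻ x, ENNReal.ofReal (m x ^ (2:ℝ)) ∂ρ = ∫⁻ x, (MG x)^2 ∂ρ := by
      refine lintegral_congr fun x => ?_
      rw [hm]
      rw [Real.rpow_two, ← ENNReal.toReal_pow, ENNReal.ofReal_toReal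
        (ENNReal.pow_ne_top (hMGfin x))]
    set ν := ρ.withDensity G with hν
    have key : ∀ t ∈ Set.Ioi (0:ℝ),
        ρ {a | t < m a} * ENNReal.ofReal (t ^ (2-1:ℝ))
          ≤ 2 * De * ν {x | t < (2 * G x).toReal} := by
      intro t ht
      simp only [Set.mem_Ioi] at ht
      have ht1 : ENNReal.ofReal (t ^ (2-1:ℝ)) = ENNReal.ofReal t := by
        norm_num
      set t' := ENNReal.ofReal (t/2) with ht'
      have ht'0 : t' ≠ 0 := by
        simp only [ht', ne_eq, ENNReal.ofReal_eq_zero, not_le]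
        linarith
      have ht'top : t' ≠ ∞ := ENNReal.ofReal_ne_top
      have hsplit : ENNReal.ofReal t = t' + t' := by
        rw [ht', ← ENNReal.ofReal_add (by linarith) (by linarith)]
        norm_num
      have hsetm : MeasurableSet {y | t' < G y} := measurableSet_lt measurable_const hGmeas
      set Htr : EuclideanSpace ℝ (Fin d) → ℝ≥0∞ :=
        fun y => ({y | t' < G y}).indicator G y with hHtr
      have hsub : {a | t < m a} ⊆ {a | t' < mOp ρ z l B s Htr a} := by
        intro x hx
        simp only [Set.mem_setOf_eq] at hx ⊢
        have h1 : ENNReal.ofReal t < MG x :=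
          (ENNReal.ofReal_lt_iff_lt_toReal ht.le (hMGfin x)).mpr hx
        have h2 : MG x ≤ mOp ρ z l B s Htr x + t' := mOp_le_trunc_add s G hGmeas t' x
        have h3 := lt_of_lt_of_le h1 h2
        rw [hsplit] at h3
        exact (ENNReal.add_lt_add_iff_right ht'top).mp h3
      have hweak := mOp_weak hd hl hB hdb s Htr ht'0 ht'top
      have hHtrint : ∫⁻ y, Htr y ∂ρ = ν {x | t' < G x} := by
        rw [hν, withDensity_apply G hsetm, hHtr, lintegral_indicator hsetm]
      have hνset : ν {x | t' < G x} = ν {x | t < (2 * G x).toReal} := by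
        congr 1
        ext x
        simp only [Set.mem_setOf_eq]
        have hfin : (2 : ℝ≥0∞) * G x ≠ ∞ := ENNReal.mul_ne_top (by norm_num) (hGfin x)
        rw [← ENNReal.ofReal_lt_iff_lt_toReal ht.le hfin]
        have h2t : (2:ℝ≥0∞) * t' = ENNReal.ofReal t := by rw [two_mul, ← hsplit]
        rw [← h2t]
        exact (ENNReal.mul_lt_mul_iff_right (by norm_num) (by norm_num)).symm
      calc ρ {a | t < m a} * ENNReal.ofReal (t ^ (2-1:ℝ))
          = ρ {a | t < m a} * ENNReal.ofReal t := by rw [ht1]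
        _ ≤ ρ {a | t' < mOp ρ z l B s Htr a} * ENNReal.ofReal t :=
            mul_le_mul_left (measure_mono hsub) _
        _ ≤ (De * (∫⁻ y, Htr y ∂ρ) / t') * ENNReal.ofReal t :=
            mul_le_mul_left hweak _
        _ = (De * ν {x | t' < G x} / t') * (t' + t') := by rw [hHtrint, hsplit]
        _ = De * ν {x | t' < G x} + De * ν {x | t' < G x} := by
            rw [mul_add, ENNReal.div_mul_cancel ht'0 ht'top]
        _ = 2 * De * ν {x | t < (2 * G x).toReal} := by
            rw [hνset]; ring
    have hgr_nn : 0 ≤ᵐ[ν] fun x => (2 * G x).toReal :=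
      Filter.Eventually.of_forall fun x => ENNReal.toReal_nonneg
    have hgr_meas : AEMeasurable (fun x => (2 * G x).toReal) ν :=
      ((hGmeas.const_mul 2).ennreal_toReal).aemeasurable
    have hlayer2 := lintegral_eq_lintegral_meas_lt ν hgr_nn hgr_meas
    have h2De : (2:ℝ≥0∞) * De ≠ ∞ := ENNReal.mul_ne_top (by norm_num) hDetop
    calc ∫⁻ x, (MG x)^2 ∂ρ
        = ENNReal.ofReal 2 * ∫⁻ t in Set.Ioi (0:ℝ),
            ρ {a | t < m a} * ENNReal.ofReal (t ^ (2-1:ℝ)) := by rw [← hL, layer]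
      _ ≤ 2 * ∫⁻ t in Set.Ioi (0:ℝ), 2 * De * ν {x | t < (2 * G x).toReal} := by
          rw [ENNReal.ofReal_ofNat]
          exact mul_le_mul_right (setLIntegral_mono' measurableSet_Ioi key) 2
      _ = 2 * (2 * De * ∫⁻ t in Set.Ioi (0:ℝ), ν {x | t < (2 * G x).toReal}) := by
          rw [lintegral_const_mul' _ _ h2De]
      _ = 2 * (2 * De * ∫⁻ x, ENNReal.ofReal ((2 * G x).toReal) ∂ν) := by
          rw [hlayer2]
      _ = 2 * (2 * De * ∫⁻ x, 2 * G x ∂ν) := by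
          congr 2
          refine lintegral_congr fun x => ?_
          exact ENNReal.ofReal_toReal (ENNReal.mul_ne_top (by norm_num) (hGfin x))
      _ = 2 * (2 * De * ∫⁻ x, G x * (2 * G x) ∂ρ) := by
          rw [hν, lintegral_withDensity_eq_lintegral_mul ρ hGmeas (hGmeas.const_mul 2)]
          rfl
      _ = 8 * De * ∫⁻ x, (G x)^2 ∂ρ := by
          have : ∫⁻ x, G x * (2 * G x) ∂ρ = 2 * ∫⁻ x, (G x)^2 ∂ρ := by
            rw [← lintegral_const_mul' _ _ (by norm_num : (2:ℝ≥0∞) ≠ ∞)]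
            exact lintegral_congr fun x => by ring
          rw [this]; ring
  -- Assemble
  set X := ∫⁻ x, (G x)^2 ∂ρ with hX
  set Y := ∫⁻ x, (F x)^2 ∂ρ with hY
  show X ≤ (2 * De)^3 * Y
  have h2De0 : (2:ℝ≥0∞) * De ≠ 0 := by
    simp [hDe0]
  rcases eq_or_ne X 0 with hX0 | hX0
  · rw [hX0]; exact zero_le
  rcases eq_or_ne Y ⊤ with hYtop | hYtop
  · rw [hYtop, ENNReal.mul_top (pow_ne_zero 3 h2De0)]
    exact le_top
  have chain : X ≤ (De * Y ^ ((1:ℝ)/2) * (8 * De) ^ ((1:ℝ)/2)) * X ^ ((1:ℝ)/2) := by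
    calc X ≤ De * (Y ^ ((1:ℝ)/2) * (∫⁻ x, (MG x)^2 ∂ρ) ^ ((1:ℝ)/2)) :=
          main1.trans (mul_le_mul_right CS De)
      _ ≤ De * (Y ^ ((1:ℝ)/2) * (8 * De * X) ^ ((1:ℝ)/2)) := by
          refine mul_le_mul_right (mul_le_mul_right ?_ _) De
          exact ENNReal.rpow_le_rpow max2 (by norm_num)
      _ = (De * Y ^ ((1:ℝ)/2) * (8 * De) ^ ((1:ℝ)/2)) * X ^ ((1:ℝ)/2) := by
          rw [ENNReal.mul_rpow_of_nonneg _ _ (by norm_num : (0:ℝ) ≤ 1/2)]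
          simp only [mul_assoc]
  have hXh0 : X ^ ((1:ℝ)/2) ≠ 0 := by
    simp only [ne_eq, ENNReal.rpow_eq_zero_iff, not_or]
    constructor
    · rintro ⟨h, _⟩; exact hX0 h
    · rintro ⟨h, _⟩; exact hGsqint h
  have hXhtop : X ^ ((1:ℝ)/2) ≠ ∞ := by
    simp only [ne_eq, ENNReal.rpow_eq_top_iff, not_or]
    constructor
    · rintro ⟨h, hneg⟩; norm_num at hneg
    · rintro ⟨h, _⟩; exact hGsqint h
  have hX12 : X = X ^ ((1:ℝ)/2) * X ^ ((1:ℝ)/2) := by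
    rw [← ENNReal.rpow_add _ _ hX0 hGsqint]
    norm_num
  have hfinal : X ^ ((1:ℝ)/2) ≤ De * Y ^ ((1:ℝ)/2) * (8 * De) ^ ((1:ℝ)/2) := by
    have h : X ^ ((1:ℝ)/2) * X ^ ((1:ℝ)/2)
        ≤ De * Y ^ ((1:ℝ)/2) * (8 * De) ^ ((1:ℝ)/2) * X ^ ((1:ℝ)/2) :=
      le_trans (le_of_eq hX12.symm) chain
    exact (ENNReal.mul_le_mul_iff_left hXh0 hXhtop).mp h
  rcases eq_or_ne Y 0 with hY0 | hY0
  · exfalso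
    apply hXh0
    refine le_antisymm ?_ (zero_le)
    refine hfinal.trans ?_
    rw [hY0, ENNReal.zero_rpow_of_pos (by norm_num)]
    simp
  have hY12 : Y ^ ((1:ℝ)/2) * Y ^ ((1:ℝ)/2) = Y := by
    rw [← ENNReal.rpow_add _ _ hY0 hYtop]
    norm_num
  have h8De0 : (8:ℝ≥0∞) * De ≠ 0 := by simp [hDe0]
  have h8Detop : (8:ℝ≥0∞) * De ≠ ∞ := ENNReal.mul_ne_top (by norm_num) hDetop
  have h812 : (8 * De) ^ ((1:ℝ)/2) * (8 * De) ^ ((1:ℝ)/2) = 8 * De := by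
    rw [← ENNReal.rpow_add _ _ h8De0 h8Detop]
    norm_num
  calc X = X ^ ((1:ℝ)/2) * X ^ ((1:ℝ)/2) := hX12
    _ ≤ (De * Y ^ ((1:ℝ)/2) * (8 * De) ^ ((1:ℝ)/2))
        * (De * Y ^ ((1:ℝ)/2) * (8 * De) ^ ((1:ℝ)/2)) := mul_le_mul' hfinal hfinal
    _ = De * De * (Y ^ ((1:ℝ)/2) * Y ^ ((1:ℝ)/2))
        * ((8 * De) ^ ((1:ℝ)/2) * (8 * De) ^ ((1:ℝ)/2)) := by ring
    _ = De * De * Y * (8 * De) := by rw [hY12, h812]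
    _ = (2 * De)^3 * Y := by ring

end MaximalAux

open MaximalAux in
theorem maximal_lemma
    (d : ℕ) (hd : 1 ≤ d) (ι : Type) [Countable ι]
    (ρ : Measure (EuclideanSpace ℝ (Fin d))) (hρprob : IsProbabilityMeasure ρ)
    (z : ι → EuclideanSpace ℝ (Fin d)) (l : ι → ℝ) (hl : ∀ i, 0 < l i)
    (B : ℝ) (hB : 1 ≤ B)
    (D : ℝ) (hD : 0 < D)
    (hdoubling : ∀ i, (ρ (cube (z i) (5 * B * Real.sqrt d * l i))).toReal
        ≤ D * (ρ (cube (z i) (l i))).toReal)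
    (a : ι → ℝ) (ha : ∀ i, 0 ≤ a i) :
    (∫⁻ x, (∑' i, ENNReal.ofReal (a i) *
        Set.indicator (cube (z i) (B * l i)) (fun _ => (1 : ℝ≥0∞)) x) ^ 2 ∂ρ)
          ^ ((1 : ℝ) / 2) ≤
      ENNReal.ofReal ((2 * D) ^ ((3 : ℝ) / 2)) *
        (∫⁻ x, (∑' i, ENNReal.ofReal (a i) *
          Set.indicator (cube (z i) (l i)) (fun _ => (1 : ℝ≥0∞)) x) ^ 2 ∂ρ)
            ^ ((1 : ℝ) / 2) := by
  classical
  haveI := hρprob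
  set De := ENNReal.ofReal D with hDe
  have hDe0 : De ≠ 0 := by
    simpa [hDe, ENNReal.ofReal_eq_zero, not_le] using hD
  have hDetop : De ≠ ∞ := ENNReal.ofReal_ne_top
  have hdb : ∀ i, ρ (cube (z i) (5 * B * Real.sqrt d * l i)) ≤ De * ρ (cube (z i) (l i)) := by
    intro i
    calc ρ (cube (z i) (5 * B * Real.sqrt d * l i))
        = ENNReal.ofReal ((ρ (cube (z i) (5 * B * Real.sqrt d * l i))).toReal) :=
          (ENNReal.ofReal_toReal (measure_ne_top ρ _)).symm
      _ ≤ ENNReal.ofReal (D * (ρ (cube (z i) (l i))).toReal) :=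
          ENNReal.ofReal_le_ofReal (hdoubling i)
      _ = De * ρ (cube (z i) (l i)) := by
          rw [ENNReal.ofReal_mul hD.le, ENNReal.ofReal_toReal (measure_ne_top ρ _), hDe]
  set A : ι → ℝ≥0∞ := fun i => ENNReal.ofReal (a i) with hA
  have hAtop : ∀ i, A i ≠ ∞ := fun i => ENNReal.ofReal_ne_top
  set Gs : Finset ι → EuclideanSpace ℝ (Fin d) → ℝ≥0∞ :=
    fun s x => ∑ i ∈ s, A i * (cube (z i) (B * l i)).indicator (fun _ => (1:ℝ≥0∞)) x
    with hGs
  have hsq : ∀ x, (∑' i, A i * (cube (z i) (B * l i)).indicator (fun _ => (1:ℝ≥0∞)) x)^2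
      = ⨆ s : Finset ι, (Gs s x)^2 := by
    intro x
    rw [ENNReal.tsum_eq_iSup_sum]
    apply le_antisymm
    · rw [pow_two, ENNReal.iSup_mul]
      refine iSup_le fun s => ?_
      rw [ENNReal.mul_iSup]
      refine iSup_le fun t => ?_
      have h1 : Gs s x * Gs t x ≤ Gs (s ∪ t) x * Gs (s ∪ t) x :=
        mul_le_mul' (Finset.sum_le_sum_of_subset Finset.subset_union_left)
          (Finset.sum_le_sum_of_subset Finset.subset_union_right)
      refine h1.trans ?_
      rw [← pow_two]
      exact le_iSup (fun u : Finset ι => (Gs u x)^2) (s ∪ t)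
    · refine iSup_le fun s => ?_
      have h2 : Gs s x ≤ ⨆ u : Finset ι, Gs u x := le_iSup (fun u : Finset ι => Gs u x) s
      calc (Gs s x)^2 = Gs s x * Gs s x := pow_two _
        _ ≤ (⨆ u : Finset ι, Gs u x) * (⨆ u : Finset ι, Gs u x) := mul_le_mul' h2 h2
        _ = (⨆ u : Finset ι, Gs u x)^2 := (pow_two _).symm
  have hmeas : ∀ s : Finset ι, Measurable (fun x => (Gs s x)^2) := by
    intro s
    exact (Finset.measurable_sum _ fun i _ =>
      (measurable_const.indicator (measurableSet_cube _ _)).const_mul _).pow_const 2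
  have hdir : Directed (· ≤ ·) (fun s : Finset ι => fun x => (Gs s x)^2) := by
    refine Monotone.directed_le fun s t hst x => ?_
    exact pow_le_pow_left' (Finset.sum_le_sum_of_subset hst) 2
  have hlin : ∫⁻ x, (∑' i, A i * (cube (z i) (B * l i)).indicator (fun _ => (1:ℝ≥0∞)) x)^2 ∂ρ
      = ⨆ s : Finset ι, ∫⁻ x, (Gs s x)^2 ∂ρ := by
    calc ∫⁻ x, (∑' i, A i * (cube (z i) (B * l i)).indicator (fun _ => (1:ℝ≥0∞)) x)^2 ∂ρ
        = ∫⁻ x, ⨆ s : Finset ι, (Gs s x)^2 ∂ρ := lintegral_congr hsq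
      _ = ⨆ s : Finset ι, ∫⁻ x, (Gs s x)^2 ∂ρ :=
          lintegral_iSup_directed (fun s => (hmeas s).aemeasurable) hdir
  have hbound : ∫⁻ x, (∑' i, A i * (cube (z i) (B * l i)).indicator (fun _ => (1:ℝ≥0∞)) x)^2 ∂ρ
      ≤ (2 * De)^3 *
        ∫⁻ x, (∑' i, A i * (cube (z i) (l i)).indicator (fun _ => (1:ℝ≥0∞)) x)^2 ∂ρ := by
    rw [hlin]
    refine iSup_le fun s => ?_
    refine (core hd ρ z l hl hB hDe0 hDetop hdb A hAtop s).trans ?_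
    refine mul_le_mul_right (lintegral_mono fun x => ?_) _
    exact pow_le_pow_left' (ENNReal.sum_le_tsum s) 2
  have h2D : (0:ℝ) ≤ 2 * D := by linarith
  have hconst : (((2 * De)^3 : ℝ≥0∞)) ^ ((1:ℝ)/2)
      = ENNReal.ofReal ((2 * D) ^ ((3:ℝ)/2)) := by
    have e1 : (2 * De : ℝ≥0∞) = ENNReal.ofReal (2 * D) := by
      rw [hDe, ENNReal.ofReal_mul (by norm_num : (0:ℝ) ≤ 2), ENNReal.ofReal_ofNat]
    have hreal : (((2*D)^(3:ℕ) : ℝ)) ^ ((1:ℝ)/2) = (2*D) ^ ((3:ℝ)/2) := by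
      rw [← Real.rpow_natCast (2*D) 3, ← Real.rpow_mul h2D]
      norm_num
    rw [e1, ← ENNReal.ofReal_pow h2D, ENNReal.ofReal_rpow_of_nonneg (by positivity)
      (by norm_num), hreal]
  calc (∫⁻ x, (∑' i, A i * (cube (z i) (B * l i)).indicator (fun _ => (1:ℝ≥0∞)) x)^2 ∂ρ)
        ^ ((1:ℝ)/2)
      ≤ ((2 * De)^3 *
          ∫⁻ x, (∑' i, A i * (cube (z i) (l i)).indicator (fun _ => (1:ℝ≥0∞)) x)^2 ∂ρ)
        ^ ((1:ℝ)/2) := ENNReal.rpow_le_rpow hbound (by norm_num)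
    _ = (((2 * De)^3 : ℝ≥0∞)) ^ ((1:ℝ)/2) *
        (∫⁻ x, (∑' i, A i * (cube (z i) (l i)).indicator (fun _ => (1:ℝ≥0∞)) x)^2 ∂ρ)
          ^ ((1:ℝ)/2) := ENNReal.mul_rpow_of_nonneg _ _ (by norm_num)
    _ = ENNReal.ofReal ((2 * D) ^ ((3:ℝ)/2)) *
        (∫⁻ x, (∑' i, A i * (cube (z i) (l i)).indicator (fun _ => (1:ℝ≥0∞)) x)^2 ∂ρ)
          ^ ((1:ℝ)/2) := by rw [hconst]
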